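/- (Leftover hash lemma) Let X be a random variable over a finite set X with min-entropy H_∞(X) ≥ m + 2 log(1/ε), and let h : S × X → {0,1}^m be a 2-universal hash function. If S is uniform over S and independent of X, then (h(S,X), S) is ε-close (in statistical distance) to (U, S), where U is uniform over {0,1}^m and independent of S. -/

import Mathlib

open Finset

/-- Leftover hash lemma: if `H_∞(X) ≥ m + 2 log(1/ε)` (i.e. every outcome has
probability at most `ε² / 2^m`) and `h` is a 2-universal family of hash
functions into `{0,1}^m`, then `(h(S,X), S)` is `ε`-close to `(U, S)` for a
uniform and independent seed `S`. -/
theorem stmt_12 {X S : Type*} [Fintype X] [Fintype S] [Nonempty S]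
    {m : ℕ} (P : X → ℝ) (h : S → X → (Fin m → Bool)) (ε : ℝ)
    (hP : ∀ x, 0 ≤ P x) (hPs : ∑ x, P x = 1) (hε : 0 < ε)
    (hmin : ∀ x, P x ≤ ε ^ 2 / 2 ^ m)
    (huniv : ∀ x x', x ≠ x' →
      ((Finset.univ.filter (fun s => h s x = h s x')).card : ℝ) / (Fintype.card S)
        ≤ 1 / 2 ^ m) :
    (1/2) * ∑ vs : (Fin m → Bool) × S,
        |(1 / (Fintype.card S : ℝ))
            * ∑ x ∈ Finset.univ.filter (fun x => h vs.2 x = vs.1), P x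
          - 1 / ((2 ^ m : ℝ) * (Fintype.card S : ℝ))|
      ≤ ε := by
  classical
  set cS : ℝ := (Fintype.card S : ℝ) with hcS
  have hcSpos : (0:ℝ) < cS := by
    rw [hcS]; exact_mod_cast Fintype.card_pos (α := S)
  have h2m : (0:ℝ) < (2:ℝ) ^ m := by positivity
  set N : ℝ := (2:ℝ) ^ m * cS with hN
  have hNpos : 0 < N := by positivity
  set D : (Fin m → Bool) × S → ℝ :=
    fun vs => (1 / cS) * ∑ x ∈ Finset.univ.filter (fun x => h vs.2 x = vs.1), P x with hD
  set C : X → X → ℝ :=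
    fun x x' => ((Finset.univ.filter (fun s => h s x = h s x')).card : ℝ) with hC
  -- D sums to 1
  have hDsum : ∑ vs : (Fin m → Bool) × S, D vs = 1 := by
    rw [Fintype.sum_prod_type_right]
    have key : ∀ s : S, ∑ v : Fin m → Bool, D (v, s) = 1 / cS := by
      intro s
      simp only [hD]
      rw [← Finset.mul_sum,
        Finset.sum_fiberwise (Finset.univ) (fun x => h s x) P, hPs, mul_one]
    rw [Finset.sum_congr rfl (fun s _ => key s), Finset.sum_const, Finset.card_univ,
      nsmul_eq_mul]
    rw [← hcS]; field_simp
  -- sum of squares of D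
  have hDsq : ∑ vs : (Fin m → Bool) × S, (D vs) ^ 2 ≤ (1 + ε ^ 2) / N := by
    have key : ∑ vs : (Fin m → Bool) × S, (D vs) ^ 2
        = (1 / cS ^ 2) * ∑ x : X, ∑ x' : X, P x * P x' * C x x' := by
      rw [Fintype.sum_prod_type_right]
      have step1 : ∀ s : S, ∑ v : Fin m → Bool, (D (v, s)) ^ 2
          = (1 / cS ^ 2) * ∑ x : X,
              ∑ x' ∈ Finset.univ.filter (fun x' => h s x' = h s x), P x * P x' := by
        intro s
        simp only [hD, mul_pow]
        rw [← Finset.mul_sum]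
        congr 1
        · rw [div_pow, one_pow]
        have expand : ∀ v : Fin m → Bool,
            (∑ x ∈ Finset.univ.filter (fun x => h s x = v), P x) ^ 2
            = ∑ x ∈ Finset.univ.filter (fun x => h s x = v),
                ∑ x' ∈ Finset.univ.filter (fun x' => h s x' = h s x), P x * P x' := by
          intro v
          rw [sq, Finset.sum_mul_sum]
          apply Finset.sum_congr rfl
          intro x hx
          have hxv : h s x = v := by
            simpa using (Finset.mem_filter.1 hx).2
          apply Finset.sum_congr
          · apply Finset.filter_congr
            intro x' _
            simp [hxv]
          · intros; rfl
        rw [Finset.sum_congr rfl (fun v _ => expand v)]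
        exact Finset.sum_fiberwise Finset.univ (fun x => h s x)
          (fun x => ∑ x' ∈ Finset.univ.filter (fun x' => h s x' = h s x), P x * P x')
      rw [Finset.sum_congr rfl (fun s _ => step1 s), ← Finset.mul_sum]
      congr 1
      rw [Finset.sum_comm]
      apply Finset.sum_congr rfl
      intro x _
      simp only [Finset.sum_filter]
      rw [Finset.sum_comm]
      apply Finset.sum_congr rfl
      intro x' _
      have hfe : (Finset.univ.filter (fun s => h s x' = h s x))
          = (Finset.univ.filter (fun s => h s x = h s x')) :=
        Finset.filter_congr fun s _ => by simp [eq_comm]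
      rw [← Finset.sum_filter, hfe, Finset.sum_const, nsmul_eq_mul, mul_comm]
    rw [key]
    have hCle : ∀ x x', x ≠ x' → C x x' ≤ cS / 2 ^ m := by
      intro x x' hne
      have h1 := huniv x x' hne
      rw [div_le_div_iff₀ hcSpos h2m] at h1
      simp only [hC]
      rw [le_div_iff₀ h2m]
      linarith
    have hinner : ∀ x : X, ∑ x' : X, P x * P x' * C x x'
        ≤ (ε ^ 2 / 2 ^ m) * P x * cS + (cS / 2 ^ m) * ∑ x' : X, P x * P x' := by
      intro x
      rw [← Finset.add_sum_erase (Finset.univ) _ (Finset.mem_univ x)]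
      have hdiag : P x * P x * C x x ≤ (ε ^ 2 / 2 ^ m) * P x * cS := by
        have hCxx : C x x = cS := by
          simp [hC, Finset.filter_true_of_mem, Finset.card_univ, hcS]
        rw [hCxx]
        have h2 := mul_le_mul_of_nonneg_right (hmin x) (mul_nonneg (hP x) hcSpos.le)
        nlinarith [h2]
      have hoff : ∑ x' ∈ Finset.univ.erase x, P x * P x' * C x x'
          ≤ (cS / 2 ^ m) * ∑ x' : X, P x * P x' := by
        calc ∑ x' ∈ Finset.univ.erase x, P x * P x' * C x x'
            ≤ ∑ x' ∈ Finset.univ.erase x, P x * P x' * (cS / 2 ^ m) := by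
              apply Finset.sum_le_sum
              intro x' hx'
              have hne : x ≠ x' := (Finset.ne_of_mem_erase hx').symm
              have := hCle x x' hne
              have hpp : 0 ≤ P x * P x' := mul_nonneg (hP x) (hP x')
              nlinarith
          _ = (cS / 2 ^ m) * ∑ x' ∈ Finset.univ.erase x, P x * P x' := by
              rw [Finset.mul_sum]; apply Finset.sum_congr rfl; intros; ring
          _ ≤ (cS / 2 ^ m) * ∑ x' : X, P x * P x' := by
              apply mul_le_mul_of_nonneg_left
              · apply Finset.sum_le_sum_of_subset_of_nonneg (Finset.subset_univ _)
                intro x' _ _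
                exact mul_nonneg (hP x) (hP x')
              · positivity
      linarith
    calc (1 / cS ^ 2) * ∑ x : X, ∑ x' : X, P x * P x' * C x x'
        ≤ (1 / cS ^ 2) * ∑ x : X,
            ((ε ^ 2 / 2 ^ m) * P x * cS + (cS / 2 ^ m) * ∑ x' : X, P x * P x') := by
          apply mul_le_mul_of_nonneg_left (Finset.sum_le_sum (fun x _ => hinner x))
          positivity
      _ = (1 + ε ^ 2) / N := by
          rw [Finset.sum_add_distrib]
          have e1 : ∑ x : X, (ε ^ 2 / 2 ^ m) * P x * cS = (ε ^ 2 / 2 ^ m) * cS := by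
            rw [← Finset.sum_mul, ← Finset.mul_sum, hPs, mul_one]
          have e2 : ∑ x : X, (cS / 2 ^ m) * ∑ x' : X, P x * P x' = cS / 2 ^ m := by
            have : ∀ x : X, ∑ x' : X, P x * P x' = P x := by
              intro x; rw [← Finset.mul_sum, hPs, mul_one]
            rw [Finset.sum_congr rfl (fun x _ => by rw [this x]), ← Finset.mul_sum, hPs,
              mul_one]
          rw [e1, e2, hN]
          field_simp
          ring
  -- the product card
  have hcard : ((Fintype.card ((Fin m → Bool) × S)) : ℝ) = N := by
    rw [Fintype.card_prod, Fintype.card_fun, Fintype.card_bool, Fintype.card_fin]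
    push_cast [hN, hcS]
    ring
  -- variance bound
  have hvar : ∑ vs : (Fin m → Bool) × S, (D vs - 1 / N) ^ 2 ≤ ε ^ 2 / N := by
    have expand : ∑ vs : (Fin m → Bool) × S, (D vs - 1 / N) ^ 2
        = (∑ vs : (Fin m → Bool) × S, (D vs) ^ 2) - 1 / N := by
      have e : ∀ vs : (Fin m → Bool) × S,
          (D vs - 1 / N) ^ 2 = (D vs) ^ 2 - (2 / N) * D vs + (1 / N) ^ 2 := by
        intro vs; field_simp; ring
      rw [Finset.sum_congr rfl (fun vs _ => e vs), Finset.sum_add_distrib,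
        Finset.sum_sub_distrib, ← Finset.mul_sum, hDsum, Finset.sum_const,
        Finset.card_univ, nsmul_eq_mul, hcard]
      field_simp
      ring
    rw [expand]
    have : (1 + ε ^ 2) / N - 1 / N = ε ^ 2 / N := by field_simp; ring
    linarith
  -- Cauchy-Schwarz
  set T : ℝ := ∑ vs : (Fin m → Bool) × S, |D vs - 1 / N| with hT
  have hTnn : 0 ≤ T := Finset.sum_nonneg (fun vs _ => abs_nonneg _)
  have hT2 : T ^ 2 ≤ ε ^ 2 := by
    calc T ^ 2 ≤ ((Finset.univ : Finset ((Fin m → Bool) × S)).card : ℝ)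
          * ∑ vs : (Fin m → Bool) × S, |D vs - 1 / N| ^ 2 := sq_sum_le_card_mul_sum_sq
      _ = N * ∑ vs : (Fin m → Bool) × S, (D vs - 1 / N) ^ 2 := by
          rw [Finset.card_univ, hcard]
          congr 1
          exact Finset.sum_congr rfl (fun vs _ => sq_abs _)
      _ ≤ N * (ε ^ 2 / N) := by
          apply mul_le_mul_of_nonneg_left hvar (le_of_lt hNpos)
      _ = ε ^ 2 := by field_simp
  have hTle : T ≤ ε := by nlinarith
  show (1/2) * T ≤ ε
  linarith
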